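/- A procedure graph (the directed graph whose edges record, for a simple matrix A avoiding F(1,2,2,1), the unique [0;1]-column-occurrence on a pair of rows removed at each step) contains no directed cycle. -/

import Mathlib

/-- A (0,1)-matrix (entries as `Bool`) is simple if it has no repeated columns. -/
def Simple {α β : Type*} (A : α → β → Bool) : Prop :=
  Function.Injective fun j i => A i j

/-- `F` is a configuration in `A`: some submatrix of `A` is a row and column
permutation of `F`. -/
def IsConfig {α β γ δ : Type*} (F : α → β → Bool) (A : γ → δ → Bool) : Prop :=
  ∃ (r : α ↪ γ) (c : β ↪ δ), ∀ i j, F i j = A (r i) (c j)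

/-- `F(1,2,2,1)`: the 2×6 configuration with columns (0,0),(1,0),(1,0),(0,1),(0,1),(1,1). -/
def F1221 : Fin 2 → Fin 6 → Bool :=
  ![![false, true, true, false, false, true], ![false, false, false, true, true, true]]

/-- `L` records a run of the procedure building the procedure graph of `A`:
each step is a triple `(j, k, α)` of two rows and the removed column; the removed
columns are pairwise distinct; exactly `n - (m+1)` steps are performed, so that at most
`m+1` columns remain; and at each step, among the columns not yet removed, the rows
`j, k` carry all four (0,1)-patterns (a `K₂`), the column `α` has entry 0 in row `j`
and 1 in row `k`, and `α` is the unique remaining column with this `[0;1]` pattern on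
rows `j, k`.  The directed edges of the procedure graph are the pairs `(j, k)`. -/
def IsProcedureList {m n : ℕ} (A : Fin m → Fin n → Bool)
    (L : List (Fin m × Fin m × Fin n)) : Prop :=
  (L.map fun s => s.2.2).Nodup ∧
  L.length = n - (m + 1) ∧
  ∀ (t : ℕ) (ht : t < L.length),
    let s := L.get ⟨t, ht⟩
    let R : Finset (Fin n) :=
      Finset.univ.filter fun c => c ∉ (L.take t).map fun s' => s'.2.2
    (∀ p : Bool × Bool, ∃ c ∈ R, A s.1 c = p.1 ∧ A s.2.1 c = p.2) ∧
    A s.1 s.2.2 = false ∧ A s.2.1 s.2.2 = true ∧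
    ∀ c ∈ R, A s.1 c = false → A s.2.1 c = true → c = s.2.2

/-- The directed edge set of the procedure recorded by `L`. -/
def procEdges {m n : ℕ} (L : List (Fin m × Fin m × Fin n)) : List (Fin m × Fin m) :=
  L.map fun s => (s.1, s.2.1)

/-- A procedure graph of a simple matrix avoiding `F(1,2,2,1)` contains no directed
cycle. -/
theorem stmt9 (m n : ℕ) (A : Fin m → Fin n → Bool) (hS : Simple A)
    (hav : ¬ IsConfig F1221 A) (hn : m + 1 < n)
    (L : List (Fin m × Fin m × Fin n)) (hL : IsProcedureList A L) :
    ¬ ∃ (p : ℕ) (v : ℕ → Fin m), 1 ≤ p ∧ v p = v 0 ∧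
        ∀ i < p, (v i, v (i + 1)) ∈ procEdges L := by
  rintro ⟨p, v, hp, hvp, hcyc⟩
  obtain ⟨-, -, hstep⟩ := hL
  have hchoice : ∀ i : Fin p, ∃ t : ℕ, ∃ ht : t < L.length,
      (L.get ⟨t, ht⟩).1 = v i.1 ∧ (L.get ⟨t, ht⟩).2.1 = v (i.1 + 1) := by
    intro i
    have h := hcyc i.1 i.2
    simp only [procEdges, List.mem_map, Prod.mk.injEq] at h
    obtain ⟨a, ha, h1, h2⟩ := h
    obtain ⟨tt, hget⟩ := List.mem_iff_get.mp ha
    subst hget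
    exact ⟨tt.1, tt.2, h1, h2⟩
  choose t ht h1 h2 using hchoice
  have : Nonempty (Fin p) := ⟨⟨0, hp⟩⟩
  obtain ⟨s, hs⟩ := Finite.exists_max t
  obtain ⟨hK, hα0, hα1, -⟩ := hstep (t s) (ht s)
  obtain ⟨c, hcR, hcu, hcw⟩ := hK (true, false)
  rw [h1 s] at hcu
  rw [h2 s] at hcw
  have hcmem : c ∉ (L.take (t s)).map fun s' => s'.2.2 := by
    simpa using hcR
  -- key propagation lemma
  have key : ∀ i : Fin p, A (v i.1) c = false → A (v (i.1 + 1)) c = false := by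
    intro i hvi
    rcases eq_or_lt_of_le (hs i) with heq | hlt
    · exfalso
      have hgeq : (L.get ⟨t i, ht i⟩) = (L.get ⟨t s, ht s⟩) := by
        congr 1
        exact Fin.ext heq
      have := h1 i
      rw [hgeq, h1 s] at this
      rw [← this] at hvi
      rw [hvi] at hcu
      exact Bool.false_ne_true hcu
    · obtain ⟨-, -, -, huniq⟩ := hstep (t i) (ht i)
      have hsub : L.take (t i) ⊆ L.take (t s) := by
        intro x hx
        refine List.take_subset (t i) _ ?_
        rwa [List.take_take, min_eq_left (le_of_lt hlt)]
      have hcRi : c ∈ Finset.univ.filter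
          (fun c => c ∉ (L.take (t i)).map fun s' => s'.2.2) := by
        simp only [Finset.mem_filter, Finset.mem_univ, true_and]
        exact fun hmem => hcmem (List.map_subset _ hsub hmem)
      have hne : c ≠ (L.get ⟨t i, ht i⟩).2.2 := by
        intro hceq
        apply hcmem
        rw [hceq]
        refine List.mem_map_of_mem ?_
        have : (L.take (t s))[t i]'(by
            rw [List.length_take]
            exact lt_min hlt (ht i)) = L.get ⟨t i, ht i⟩ := by
          rw [List.getElem_take]
          rfl
        rw [← this]
        exact List.getElem_mem _
      have hu := huniq c hcRi
      rw [h1 i, h2 i] at hu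
      cases hvw : A (v (i.1 + 1)) c with
      | false => rfl
      | true => exact absurd (hu hvi hvw) hne
  -- propagate `false` around the cycle
  have hppos : 0 < p := hp
  have hmod : ∀ d : ℕ, A (v ((s.1 + 1 + d) % p)) c = false := by
    intro d
    induction d with
    | zero =>
      rcases eq_or_lt_of_le (Nat.succ_le_of_lt s.2) with heq | hlt
      · rw [Nat.succ_eq_add_one] at heq
        rw [Nat.add_zero, heq, Nat.mod_self, ← hvp, ← heq]
        exact hcw
      · rw [Nat.add_zero, Nat.mod_eq_of_lt hlt]
        exact hcw
    | succ d ihd =>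
      have hip : (s.1 + 1 + d) % p < p := Nat.mod_lt _ hppos
      have h := key ⟨(s.1 + 1 + d) % p, hip⟩ ihd
      have hq := Nat.div_add_mod (s.1 + 1 + d) p
      have e : s.1 + 1 + (d + 1) =
          p * ((s.1 + 1 + d) / p) + ((s.1 + 1 + d) % p + 1) := by omega
      rw [e, Nat.mul_add_mod]
      rcases eq_or_lt_of_le (Nat.succ_le_of_lt hip) with heq | hlt
      · rw [Nat.succ_eq_add_one] at heq
        rw [heq, Nat.mod_self, ← hvp, ← heq]
        exact h
      · rw [Nat.mod_eq_of_lt hlt]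
        exact h
  have hfin := hmod (p - 1)
  have e2 : (s.1 + 1 + (p - 1)) % p = s.1 := by
    have e3 : s.1 + 1 + (p - 1) = s.1 + p := by omega
    rw [e3, Nat.add_mod_right, Nat.mod_eq_of_lt s.2]
  rw [e2] at hfin
  rw [hfin] at hcu
  exact Bool.false_ne_true hcu
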